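/- Let G : P × I → {0,1} be a 0/1 payoff function on finite sets P (programs) and I (inputs), and let v be the value of the associated zero-sum game (row player P minimizing). For any ε > 0 and k > ln|I|/(2ε²), there exists a multiset of k programs such that for every input j, the fraction of programs in the multiset with G(i,j) = 1 is less than v + ε. -/

import Mathlib

open Finset

lemma bernoulli_mgf_bound (q t : ℝ) (hq0 : 0 ≤ q) (hq1 : q ≤ 1) (ht : 0 ≤ t) :
    1 - q + q * Real.exp t ≤ Real.exp (q * t + t ^ 2 / 8) := by
  set D : ℝ → ℝ := fun s => 1 - q + q * Real.exp s with hDdef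
  have hD : ∀ s, 0 < D s := by
    intro s
    rcases hq0.eq_or_lt with h | h
    · simp [hDdef, ← h]
    · have := Real.exp_pos s
      simp only [hDdef]
      nlinarith
  have hDderiv : ∀ s, HasDerivAt D (q * Real.exp s) s := by
    intro s
    exact ((Real.hasDerivAt_exp s).const_mul q).const_add (1 - q)
  set f1 : ℝ → ℝ := fun s => q + s / 4 - q * Real.exp s / D s with hf1def
  set f : ℝ → ℝ := fun s => q * s + s ^ 2 / 8 - Real.log (D s) with hfdef
  have hfderiv : ∀ s, HasDerivAt f (f1 s) s := by
    intro s
    have h1 : HasDerivAt (fun s : ℝ => q * s + s ^ 2 / 8)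
        (q * 1 + 2 * s ^ 1 / 8) s :=
      ((hasDerivAt_id s).const_mul q).add ((hasDerivAt_pow 2 s).div_const 8)
    have h2 : HasDerivAt (fun s => Real.log (D s)) (q * Real.exp s / D s) s :=
      (hDderiv s).log (hD s).ne'
    have := h1.sub h2
    refine this.congr_deriv ?_
    simp [hf1def]; ring
  have hf1deriv : ∀ s, HasDerivAt f1 (1 / 4 - (1 - q) * (q * Real.exp s) / (D s) ^ 2) s := by
    intro s
    have h1 : HasDerivAt (fun s : ℝ => q + s / 4) (1 / 4) s := by
      simpa using ((hasDerivAt_id s).div_const 4).const_add q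
    have h2 : HasDerivAt (fun s => q * Real.exp s / D s)
        ((q * Real.exp s * D s - q * Real.exp s * (q * Real.exp s)) / (D s) ^ 2) s :=
      ((Real.hasDerivAt_exp s).const_mul q).div (hDderiv s) (hD s).ne'
    have := h1.sub h2
    refine this.congr_deriv ?_
    have : q * Real.exp s * D s - q * Real.exp s * (q * Real.exp s)
        = (1 - q) * (q * Real.exp s) := by simp only [hDdef]; ring
    rw [this]
  have hf1deriv_nonneg : ∀ s, 0 ≤ 1 / 4 - (1 - q) * (q * Real.exp s) / (D s) ^ 2 := by
    intro s
    rw [sub_nonneg, div_le_iff₀ (pow_pos (hD s) 2)]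
    have h := sq_nonneg (1 - q - q * Real.exp s)
    have : (D s) ^ 2 = (1 - q + q * Real.exp s) ^ 2 := by simp [hDdef]
    nlinarith
  have hf1mono : MonotoneOn f1 (Set.Ici (0:ℝ)) := by
    apply monotoneOn_of_deriv_nonneg (convex_Ici 0)
    · exact (continuous_iff_continuousAt.2 fun s =>
        (hf1deriv s).differentiableAt.continuousAt).continuousOn
    · intro x hx
      exact (hf1deriv x).differentiableAt.differentiableWithinAt
    · intro x hx
      rw [(hf1deriv x).deriv]
      exact hf1deriv_nonneg x
  have hf10 : f1 0 = 0 := by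
    simp [hf1def, hDdef, Real.exp_zero]
  have hf1nonneg : ∀ s ∈ Set.Ici (0:ℝ), 0 ≤ f1 s := by
    intro s hs
    have := hf1mono (Set.self_mem_Ici) hs hs
    rwa [hf10] at this
  have hfmono : MonotoneOn f (Set.Ici (0:ℝ)) := by
    apply monotoneOn_of_deriv_nonneg (convex_Ici 0)
    · exact (continuous_iff_continuousAt.2 fun s =>
        (hfderiv s).differentiableAt.continuousAt).continuousOn
    · intro x hx
      exact (hfderiv x).differentiableAt.differentiableWithinAt
    · intro x hx
      rw [(hfderiv x).deriv]
      exact hf1nonneg x (interior_subset hx)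
  have hf0 : f 0 = 0 := by
    simp [hfdef, hDdef, Real.exp_zero]
  have hft : 0 ≤ f t := by
    have := hfmono (Set.self_mem_Ici) ht ht
    rwa [hf0] at this
  have hlog : Real.log (D t) ≤ q * t + t ^ 2 / 8 := by
    simp only [hfdef] at hft; linarith
  calc 1 - q + q * Real.exp t = Real.exp (Real.log (D t)) := by
        rw [Real.exp_log (hD t)]
    _ ≤ Real.exp (q * t + t ^ 2 / 8) := Real.exp_le_exp.mpr hlog

open Finset

theorem yao_uniform_randomized {P I : Type*} [Fintype P] [Fintype I]
    [Nonempty P] [Nonempty I]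
    (G : P → I → ℝ) (hG : ∀ i j, G i j = 0 ∨ G i j = 1)
    (ε : ℝ) (hε : 0 < ε) (k : ℕ) (hk : 0 < k)
    (hkI : Real.log (Fintype.card I) / (2 * ε ^ 2) < k) :
    ∃ S : Fin k → P, ∀ j : I,
      (1 / k : ℝ) * ∑ m, G (S m) j <
        (⨅ p : stdSimplex ℝ P, ⨆ j' : I, ∑ i, p.1 i * G i j') + ε := by
  classical
  haveI : Nonempty (stdSimplex ℝ P) :=
    ⟨⟨_, ite_eq_mem_stdSimplex ℝ (Classical.arbitrary P)⟩⟩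
  set v : ℝ := ⨅ p : stdSimplex ℝ P, ⨆ j' : I, ∑ i, p.1 i * G i j' with hv
  -- a minimizing strategy
  have hcont : ContinuousOn (fun p : P → ℝ => ⨆ j' : I, ∑ i, p i * G i j')
      (stdSimplex ℝ P) := by
    have heq : (fun p : P → ℝ => ⨆ j' : I, ∑ i, p i * G i j') =
        fun p : P → ℝ => univ.sup' univ_nonempty (fun j' => ∑ i, p i * G i j') := by
      funext p
      rw [Finset.sup'_univ_eq_ciSup]
    rw [heq]
    refine (Continuous.finset_sup'_apply univ_nonempty fun j' _ => ?_).continuousOn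
    exact continuous_finset_sum _ fun i _ => (continuous_apply i).mul continuous_const
  obtain ⟨p, hp, hpmin⟩ := (isCompact_stdSimplex ℝ P).exists_isMinOn
    ⟨_, ite_eq_mem_stdSimplex ℝ (Classical.arbitrary P)⟩ hcont
  set q : I → ℝ := fun j => ∑ i, p i * G i j with hqdef
  have hG0 : ∀ i j, 0 ≤ G i j := fun i j => by rcases hG i j with h | h <;> simp [h]
  have hG1 : ∀ i j, G i j ≤ 1 := fun i j => by rcases hG i j with h | h <;> simp [h]
  have hqv : ∀ j, q j ≤ v := by
    intro j
    have h1 : q j ≤ ⨆ j' : I, ∑ i, p i * G i j' :=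
      le_ciSup (Set.Finite.bddAbove (Set.finite_range _)) j
    have h2 : (⨆ j' : I, ∑ i, p i * G i j') ≤ v := by
      rw [hv]
      exact le_ciInf fun p' => hpmin p'.2
    linarith
  have hq0 : ∀ j, 0 ≤ q j := fun j =>
    Finset.sum_nonneg fun i _ => mul_nonneg (hp.1 i) (hG0 i j)
  have hq1 : ∀ j, q j ≤ 1 := by
    intro j
    calc q j ≤ ∑ i, p i * 1 :=
          Finset.sum_le_sum fun i _ => mul_le_mul_of_nonneg_left (hG1 i j) (hp.1 i)
      _ = 1 := by simp [hp.2]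
  set t : ℝ := 4 * ε with htdef
  have ht : 0 ≤ t := by positivity
  -- the product-sum identity
  have hident : ∀ h : P → ℝ, ∑ S : Fin k → P, ∏ m, h (S m) = (∑ i, h i) ^ k := by
    intro h
    rw [← Fintype.sum_pow]
  -- mgf computation
  have hmgf : ∀ j, ∑ i, p i * Real.exp (t * G i j) = 1 - q j + q j * Real.exp t := by
    intro j
    have he : ∀ i, Real.exp (t * G i j) = 1 + (Real.exp t - 1) * G i j := by
      intro i
      rcases hG i j with h | h <;> simp [h]
    calc ∑ i, p i * Real.exp (t * G i j)
        = ∑ i, (p i + (Real.exp t - 1) * (p i * G i j)) := by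
          refine Finset.sum_congr rfl fun i _ => ?_
          rw [he i]; ring
      _ = (∑ i, p i) + (Real.exp t - 1) * ∑ i, p i * G i j := by
          rw [Finset.sum_add_distrib, ← Finset.mul_sum]
      _ = 1 - q j + q j * Real.exp t := by rw [hp.2, hqdef]; ring
  -- the bad sets
  set Bad : I → Finset (Fin k → P) :=
    fun j => univ.filter (fun S => (k : ℝ) * (v + ε) ≤ ∑ m, G (S m) j) with hBaddef
  have hw0 : ∀ S : Fin k → P, 0 ≤ ∏ m, p (S m) :=
    fun S => Finset.prod_nonneg fun m _ => hp.1 (S m)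
  have hkey : ∀ j, ∑ S ∈ Bad j, (∏ m, p (S m)) ≤ Real.exp (-(2 * k * ε ^ 2)) := by
    intro j
    have hc : ∀ S : Fin k → P,
        (∏ m, p (S m)) * Real.exp (t * ∑ m, G (S m) j - t * ((k : ℝ) * (v + ε)))
        = Real.exp (-(t * ((k : ℝ) * (v + ε)))) * ∏ m, (p (S m) * Real.exp (t * G (S m) j)) := by
      intro S
      rw [Finset.prod_mul_distrib, ← Real.exp_sum]
      rw [show (∑ m, t * G (S m) j) = t * ∑ m, G (S m) j by rw [Finset.mul_sum]]
      rw [sub_eq_add_neg, Real.exp_add]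
      ring
    calc ∑ S ∈ Bad j, (∏ m, p (S m))
        ≤ ∑ S ∈ Bad j, (∏ m, p (S m)) *
            Real.exp (t * ∑ m, G (S m) j - t * ((k : ℝ) * (v + ε))) := by
          refine Finset.sum_le_sum fun S hS => ?_
          rw [hBaddef, Finset.mem_filter] at hS
          have harg : 0 ≤ t * ∑ m, G (S m) j - t * ((k : ℝ) * (v + ε)) := by
            have := hS.2
            nlinarith
          nlinarith [Real.one_le_exp harg, hw0 S,
            Real.exp_pos (t * ∑ m, G (S m) j - t * ((k : ℝ) * (v + ε)))]
      _ ≤ ∑ S : Fin k → P, (∏ m, p (S m)) *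
            Real.exp (t * ∑ m, G (S m) j - t * ((k : ℝ) * (v + ε))) := by
          refine Finset.sum_le_sum_of_subset_of_nonneg (Finset.filter_subset _ _)
            fun S _ _ => ?_
          exact mul_nonneg (hw0 S) (Real.exp_pos _).le
      _ = Real.exp (-(t * ((k : ℝ) * (v + ε)))) *
            ∑ S : Fin k → P, ∏ m, (p (S m) * Real.exp (t * G (S m) j)) := by
          rw [Finset.mul_sum]
          exact Finset.sum_congr rfl fun S _ => hc S
      _ = Real.exp (-(t * ((k : ℝ) * (v + ε)))) *
            (∑ i, p i * Real.exp (t * G i j)) ^ k := by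
          rw [hident (fun i => p i * Real.exp (t * G i j))]
      _ ≤ Real.exp (-(t * ((k : ℝ) * (v + ε)))) *
            (Real.exp (q j * t + t ^ 2 / 8)) ^ k := by
          refine mul_le_mul_of_nonneg_left (pow_le_pow_left₀ ?_ ?_ k) (Real.exp_pos _).le
          · exact Finset.sum_nonneg fun i _ =>
              mul_nonneg (hp.1 i) (Real.exp_pos _).le
          · rw [hmgf j]
            exact bernoulli_mgf_bound (q j) t (hq0 j) (hq1 j) ht
      _ = Real.exp (-(t * ((k : ℝ) * (v + ε))) + (k : ℝ) * (q j * t + t ^ 2 / 8)) := by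
          rw [← Real.exp_nat_mul, ← Real.exp_add]
      _ ≤ Real.exp (-(2 * k * ε ^ 2)) := by
          refine Real.exp_le_exp.mpr ?_
          have hqj := hqv j
          have hk0 : (0 : ℝ) ≤ k := Nat.cast_nonneg k
          rw [htdef]
          nlinarith [mul_nonneg hk0 (mul_nonneg (by positivity : (0:ℝ) ≤ 4 * ε) (sub_nonneg.mpr hqj))]
  -- union bound / contradiction
  by_contra hcon
  push_neg at hcon
  have hmem : ∀ S : Fin k → P, ∃ j, S ∈ Bad j := by
    intro S
    obtain ⟨j, hj⟩ := hcon S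
    refine ⟨j, ?_⟩
    rw [hBaddef, Finset.mem_filter]
    refine ⟨Finset.mem_univ _, ?_⟩
    have hkpos : (0 : ℝ) < k := by exact_mod_cast hk
    have := mul_le_mul_of_nonneg_left hj hkpos.le
    calc (k : ℝ) * (v + ε) ≤ (k : ℝ) * ((1 / k : ℝ) * ∑ m, G (S m) j) := this
      _ = ∑ m, G (S m) j := by field_simp
  have h1 : (1 : ℝ) = ∑ S : Fin k → P, ∏ m, p (S m) := by
    rw [hident, hp.2, one_pow]
  have h2 : ∑ S : Fin k → P, ∏ m, p (S m) ≤
      ∑ S : Fin k → P, ∑ j, (if S ∈ Bad j then ∏ m, p (S m) else 0) := by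
    refine Finset.sum_le_sum fun S _ => ?_
    obtain ⟨j, hj⟩ := hmem S
    have hnn : ∀ j' ∈ (univ : Finset I),
        0 ≤ (if S ∈ Bad j' then ∏ m, p (S m) else 0) := by
      intro j' _
      split
      · exact hw0 S
      · exact le_rfl
    have := Finset.single_le_sum hnn (Finset.mem_univ j)
    simpa [hj] using this
  have h3 : ∑ S : Fin k → P, ∑ j, (if S ∈ Bad j then ∏ m, p (S m) else 0)
      = ∑ j, ∑ S ∈ Bad j, ∏ m, p (S m) := by
    rw [Finset.sum_comm]
    refine Finset.sum_congr rfl fun j _ => ?_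
    simp only [hBaddef, Finset.mem_filter, Finset.mem_univ, true_and]
    exact (Finset.sum_filter _ _).symm
  have h4 : ∑ j : I, ∑ S ∈ Bad j, (∏ m, p (S m)) ≤
      (Fintype.card I : ℝ) * Real.exp (-(2 * k * ε ^ 2)) := by
    calc ∑ j : I, ∑ S ∈ Bad j, (∏ m, p (S m))
        ≤ ∑ _j : I, Real.exp (-(2 * k * ε ^ 2)) := Finset.sum_le_sum fun j _ => hkey j
      _ = (Fintype.card I : ℝ) * Real.exp (-(2 * k * ε ^ 2)) := by
          rw [Finset.sum_const, card_univ, nsmul_eq_mul]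
  have h5 : (Fintype.card I : ℝ) * Real.exp (-(2 * k * ε ^ 2)) < 1 := by
    have hcard : (0 : ℝ) < Fintype.card I := by
      exact_mod_cast Fintype.card_pos
    have hlog : Real.log (Fintype.card I) < 2 * k * ε ^ 2 := by
      have h2e : (0 : ℝ) < 2 * ε ^ 2 := by positivity
      have := (div_lt_iff₀ h2e).mp hkI
      nlinarith
    have : (Fintype.card I : ℝ) < Real.exp (2 * k * ε ^ 2) := by
      rw [← Real.exp_log hcard]
      exact Real.exp_lt_exp.mpr hlog
    calc (Fintype.card I : ℝ) * Real.exp (-(2 * k * ε ^ 2))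
        < Real.exp (2 * k * ε ^ 2) * Real.exp (-(2 * k * ε ^ 2)) :=
          mul_lt_mul_of_pos_right this (Real.exp_pos _)
      _ = 1 := by rw [← Real.exp_add]; simp
  rw [h3] at h2
  linarith
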